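/- In the setting of annealed importance sampling with forward path measure P⃗, backward path measure P⃖ (built from the backward kernels B_ℓ of the forward kernels F_ℓ with invariant distributions π_ℓ), and reference path measure P(x_{0:M}) = π₀(x₀)∏ F*_ℓ(x_{ℓ-1}, x_ℓ) where each F*_ℓ transports π_{θ_{ℓ-1}} exactly to π_{θ_ℓ}, one has KL(P‖P⃖) = KL(P‖P⃗) + Σ_{ℓ=1}^M KL(π_{θ_{ℓ-1}}‖π_{θ_ℓ}). In particular KL(P‖P⃖) ≥ KL(P‖P⃗). -/

import Mathlib

open MeasureTheory

open scoped ENNReal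

theorem chain_lintegral {α : Type*} [MeasurableSpace α] (μ : Measure α) [SigmaFinite μ] :
    ∀ (n : ℕ) (ρ : Fin (n + 1) → α → ℝ≥0∞) (K : Fin n → α → α → ℝ≥0∞),
      (∀ i, Measurable (ρ i)) → (∀ ℓ, Measurable (Function.uncurry (K ℓ))) →
      (∀ ℓ x, ∫⁻ y, K ℓ x y ∂μ = 1) →
      (∀ ℓ y, ∫⁻ x, ρ ℓ.castSucc x * K ℓ x y ∂μ = ρ ℓ.succ y) →
      ∀ (k : Fin (n + 1)) (g : α → ℝ≥0∞), Measurable g →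
      (∫⁻ x : Fin (n + 1) → α,
          ρ 0 (x 0) * (∏ ℓ : Fin n, K ℓ (x ℓ.castSucc) (x ℓ.succ)) * g (x k)
          ∂(Measure.pi fun _ => μ)) = ∫⁻ y, ρ k y * g y ∂μ := by
  intro n
  induction n with
  | zero =>
    intro ρ K hρ hK hK1 htr k g hg
    have hk : k = 0 := Fin.fin_one_eq_zero k
    subst hk
    have h := (measurePreserving_funUnique μ (Fin 1)).lintegral_comp
      (f := fun a => ρ 0 a * g a) ((hρ 0).mul hg)
    calc (∫⁻ x : Fin 1 → α,
            ρ 0 (x 0) * (∏ ℓ : Fin 0, K ℓ (x ℓ.castSucc) (x ℓ.succ)) * g (x 0)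
            ∂(Measure.pi fun _ => μ))
        = ∫⁻ x : Fin 1 → α, ρ 0 (x default) * g (x default) ∂(Measure.pi fun _ => μ) := by
          refine lintegral_congr fun x => ?_
          simp
      _ = ∫⁻ y, ρ 0 y * g y ∂μ := h
  | succ n ih =>
    intro ρ K hρ hK hK1 htr k g hg
    have hterm : ∀ ℓ : Fin (n + 1),
        Measurable fun x : Fin (n + 2) → α => K ℓ (x ℓ.castSucc) (x ℓ.succ) := by
      intro ℓ
      have : Measurable fun x : Fin (n + 2) → α => (x ℓ.castSucc, x ℓ.succ) :=
        (measurable_pi_apply _).prodMk (measurable_pi_apply _)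
      exact (hK ℓ).comp this
    have hAmeas : Measurable (fun x' : Fin (n + 1) → α =>
        ρ 0 (x' 0) * ∏ j : Fin n, K j.castSucc (x' j.castSucc) (x' j.succ)) := by
      refine Measurable.mul ((hρ 0).comp (measurable_pi_apply 0)) ?_
      refine Finset.measurable_prod _ fun j _ => ?_
      have : Measurable fun x' : Fin (n + 1) → α => (x' j.castSucc, x' j.succ) :=
        (measurable_pi_apply _).prodMk (measurable_pi_apply _)
      exact (hK j.castSucc).comp this
    -- reduction to the prod measure
    have red : ∀ (G : (Fin (n + 2) → α) → ℝ≥0∞), Measurable G →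
        (∫⁻ x : Fin (n + 2) → α,
            ρ 0 (x 0) * (∏ ℓ : Fin (n + 1), K ℓ (x ℓ.castSucc) (x ℓ.succ)) * G x
            ∂(Measure.pi fun _ => μ)) =
        ∫⁻ q : α × (Fin (n + 1) → α),
            (ρ 0 (q.2 0) * ∏ j : Fin n, K j.castSucc (q.2 j.castSucc) (q.2 j.succ)) *
              K (Fin.last n) (q.2 (Fin.last n)) q.1 * G (Fin.snoc q.2 q.1)
            ∂(μ.prod (Measure.pi fun _ : Fin (n + 1) => μ)) := by
      intro G hG
      set e := MeasurableEquiv.piFinSuccAbove (fun _ : Fin (n + 2) => α) (Fin.last (n + 1)) with he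
      have hmp := measurePreserving_piFinSuccAbove (fun _ : Fin (n + 2) => μ) (Fin.last (n + 1))
      have hsymm : ∀ (y : α) (x' : Fin (n + 1) → α),
          e.symm (y, x') = (Fin.snoc x' y : Fin (n + 2) → α) := by
        intro y x'
        show (Fin.insertNthEquiv (fun _ : Fin (n + 2) => α) (Fin.last (n + 1))) (y, x') = _
        simp [Fin.insertNth_last', Fin.snocEquiv]
      set f : (Fin (n + 2) → α) → ℝ≥0∞ := fun x =>
        ρ 0 (x 0) * (∏ ℓ : Fin (n + 1), K ℓ (x ℓ.castSucc) (x ℓ.succ)) * G x with hf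
      have hfmeas : Measurable f := by
        refine Measurable.mul (Measurable.mul ?_ ?_) hG
        · exact (hρ 0).comp (measurable_pi_apply 0)
        · exact Finset.measurable_prod _ fun ℓ _ => hterm ℓ
      have key : (∫⁻ x : Fin (n + 2) → α, f x ∂(Measure.pi fun _ => μ)) =
          ∫⁻ q : α × (Fin (n + 1) → α), f (Fin.snoc q.2 q.1)
            ∂(μ.prod (Measure.pi fun _ : Fin (n + 1) => μ)) := by
        rw [← (MeasurePreserving.symm e hmp).lintegral_comp hfmeas]
        refine lintegral_congr fun q => ?_
        rw [← hsymm q.1 q.2]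
      rw [key]
      refine lintegral_congr fun q => ?_
      rw [hf]
      simp only
      rw [Fin.prod_univ_castSucc]
      have h0 : (Fin.snoc q.2 q.1 : Fin (n + 2) → α) 0 = q.2 0 := by
        rw [show (0 : Fin (n + 2)) = (0 : Fin (n + 1)).castSucc by simp, Fin.snoc_castSucc]
      have hlast : K (Fin.last n)
            ((Fin.snoc q.2 q.1 : Fin (n + 2) → α) (Fin.last n).castSucc)
            ((Fin.snoc q.2 q.1 : Fin (n + 2) → α) (Fin.last n).succ)
          = K (Fin.last n) (q.2 (Fin.last n)) q.1 := by
        rw [Fin.succ_last, Fin.snoc_castSucc, Fin.snoc_last]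
      have hprod : (∏ j : Fin n, K j.castSucc
            ((Fin.snoc q.2 q.1 : Fin (n + 2) → α) j.castSucc.castSucc)
            ((Fin.snoc q.2 q.1 : Fin (n + 2) → α) j.castSucc.succ))
          = ∏ j : Fin n, K j.castSucc (q.2 j.castSucc) (q.2 j.succ) := by
        refine Finset.prod_congr rfl fun j _ => ?_
        rw [Fin.succ_castSucc, Fin.snoc_castSucc, Fin.snoc_castSucc]
      rw [h0, hlast, hprod]
      ring
    -- the induction hypothesis, specialized to the shifted chain
    have ih' : ∀ (k' : Fin (n + 1)) (g' : α → ℝ≥0∞), Measurable g' →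
        (∫⁻ x' : Fin (n + 1) → α,
            (ρ 0 (x' 0) * ∏ j : Fin n, K j.castSucc (x' j.castSucc) (x' j.succ)) * g' (x' k')
            ∂(Measure.pi fun _ => μ)) = ∫⁻ z, ρ k'.castSucc z * g' z ∂μ := by
      intro k' g' hg'
      have htr' : ∀ (j : Fin n) (y : α),
          ∫⁻ x, ρ j.castSucc.castSucc x * K j.castSucc x y ∂μ = ρ j.succ.castSucc y := by
        intro j y
        rw [← Fin.succ_castSucc]
        exact htr j.castSucc y
      have := ih (fun i => ρ i.castSucc) (fun j => K j.castSucc) (fun i => hρ _)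
        (fun j => hK _) (fun j x => hK1 _ x) htr' k' g' hg'
      simpa using this
    -- now case on k
    induction k using Fin.lastCases with
    | last =>
      have hGmeas : Measurable fun x : Fin (n + 2) → α => g (x (Fin.last (n + 1))) :=
        hg.comp (measurable_pi_apply _)
      rw [red _ hGmeas]
      have hQmeas : Measurable fun q : α × (Fin (n + 1) → α) =>
          (ρ 0 (q.2 0) * ∏ j : Fin n, K j.castSucc (q.2 j.castSucc) (q.2 j.succ)) *
            K (Fin.last n) (q.2 (Fin.last n)) q.1 *
            g ((Fin.snoc q.2 q.1 : Fin (n + 2) → α) (Fin.last (n + 1))) := by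
        have e1 : (fun q : α × (Fin (n + 1) → α) =>
            (ρ 0 (q.2 0) * ∏ j : Fin n, K j.castSucc (q.2 j.castSucc) (q.2 j.succ)) *
              K (Fin.last n) (q.2 (Fin.last n)) q.1 *
              g ((Fin.snoc q.2 q.1 : Fin (n + 2) → α) (Fin.last (n + 1)))) =
            fun q => (ρ 0 (q.2 0) * ∏ j : Fin n, K j.castSucc (q.2 j.castSucc) (q.2 j.succ)) *
              K (Fin.last n) (q.2 (Fin.last n)) q.1 * g q.1 := by
          funext q; rw [Fin.snoc_last]
        rw [e1]
        have hpair : Measurable fun q : α × (Fin (n + 1) → α) => (q.2 (Fin.last n), q.1) := by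
          exact ((measurable_pi_apply _).comp measurable_snd).prodMk measurable_fst
        have hKq : Measurable fun q : α × (Fin (n + 1) → α) =>
            K (Fin.last n) (q.2 (Fin.last n)) q.1 := (hK _).comp hpair
        exact Measurable.mul (Measurable.mul (hAmeas.comp measurable_snd) hKq)
          (hg.comp measurable_fst)
      rw [lintegral_prod _ hQmeas.aemeasurable]
      refine lintegral_congr fun y => ?_
      have hKy : Measurable fun z => K (Fin.last n) z y :=
        (hK _).comp (measurable_id.prodMk measurable_const)
      calc (∫⁻ x' : Fin (n + 1) → α,
              (ρ 0 (x' 0) * ∏ j : Fin n, K j.castSucc (x' j.castSucc) (x' j.succ)) *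
                K (Fin.last n) (x' (Fin.last n)) y *
                g ((Fin.snoc x' y : Fin (n + 2) → α) (Fin.last (n + 1)))
              ∂(Measure.pi fun _ => μ))
          = (∫⁻ x' : Fin (n + 1) → α,
              (ρ 0 (x' 0) * ∏ j : Fin n, K j.castSucc (x' j.castSucc) (x' j.succ)) *
                K (Fin.last n) (x' (Fin.last n)) y
              ∂(Measure.pi fun _ => μ)) * g y := by
            rw [← lintegral_mul_const]
            · refine lintegral_congr fun x' => ?_
              rw [Fin.snoc_last]
            · exact hAmeas.mul (hKy.comp (measurable_pi_apply _))
        _ = ρ (Fin.last (n + 1)) y * g y := by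
            rw [ih' (Fin.last n) (fun z => K (Fin.last n) z y) hKy,
              ← Fin.succ_last, ← htr (Fin.last n) y]
    | cast j =>
      have hGmeas : Measurable fun x : Fin (n + 2) → α => g (x j.castSucc) :=
        hg.comp (measurable_pi_apply _)
      rw [red _ hGmeas]
      have e1 : (fun q : α × (Fin (n + 1) → α) =>
          (ρ 0 (q.2 0) * ∏ j' : Fin n, K j'.castSucc (q.2 j'.castSucc) (q.2 j'.succ)) *
            K (Fin.last n) (q.2 (Fin.last n)) q.1 *
            g ((Fin.snoc q.2 q.1 : Fin (n + 2) → α) j.castSucc)) =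
          fun q => ((ρ 0 (q.2 0) * ∏ j' : Fin n, K j'.castSucc (q.2 j'.castSucc) (q.2 j'.succ)) *
            g (q.2 j)) * K (Fin.last n) (q.2 (Fin.last n)) q.1 := by
        funext q
        rw [Fin.snoc_castSucc]
        ring
      rw [e1]
      have hQmeas : Measurable fun q : α × (Fin (n + 1) → α) =>
          ((ρ 0 (q.2 0) * ∏ j' : Fin n, K j'.castSucc (q.2 j'.castSucc) (q.2 j'.succ)) *
            g (q.2 j)) * K (Fin.last n) (q.2 (Fin.last n)) q.1 := by
        have hpair : Measurable fun q : α × (Fin (n + 1) → α) => (q.2 (Fin.last n), q.1) := by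
          exact ((measurable_pi_apply _).comp measurable_snd).prodMk measurable_fst
        have hKq : Measurable fun q : α × (Fin (n + 1) → α) =>
            K (Fin.last n) (q.2 (Fin.last n)) q.1 := (hK _).comp hpair
        have hgq : Measurable fun q : α × (Fin (n + 1) → α) => g (q.2 j) := by
          exact hg.comp ((measurable_pi_apply _).comp measurable_snd)
        exact ((hAmeas.comp measurable_snd).mul hgq).mul hKq
      rw [lintegral_prod_symm _ hQmeas.aemeasurable]
      calc (∫⁻ x' : Fin (n + 1) → α, ∫⁻ y,
              ((ρ 0 (x' 0) * ∏ j' : Fin n, K j'.castSucc (x' j'.castSucc) (x' j'.succ)) *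
                g (x' j)) * K (Fin.last n) (x' (Fin.last n)) y ∂μ
              ∂(Measure.pi fun _ => μ))
          = ∫⁻ x' : Fin (n + 1) → α,
              (ρ 0 (x' 0) * ∏ j' : Fin n, K j'.castSucc (x' j'.castSucc) (x' j'.succ)) *
                g (x' j) ∂(Measure.pi fun _ => μ) := by
            refine lintegral_congr fun x' => ?_
            have hKy2 : Measurable fun y => K (Fin.last n) (x' (Fin.last n)) y := by
              exact (hK _).comp measurable_prodMk_left
            calc ∫⁻ y, (ρ 0 (x' 0) * ∏ j' : Fin n,
                    K j'.castSucc (x' j'.castSucc) (x' j'.succ)) * g (x' j) *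
                    K (Fin.last n) (x' (Fin.last n)) y ∂μ
                = (ρ 0 (x' 0) * ∏ j' : Fin n,
                    K j'.castSucc (x' j'.castSucc) (x' j'.succ)) * g (x' j) *
                    ∫⁻ y, K (Fin.last n) (x' (Fin.last n)) y ∂μ :=
                  lintegral_const_mul _ hKy2
              _ = (ρ 0 (x' 0) * ∏ j' : Fin n,
                    K j'.castSucc (x' j'.castSucc) (x' j'.succ)) * g (x' j) := by
                  rw [hK1, mul_one]
        _ = ∫⁻ z, ρ j.castSucc z * g z ∂μ := ih' j g hg

lemma integrable_of_integral_ne_zero {β : Type*} [MeasurableSpace β] {μ : Measure β}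
    {f : β → ℝ} (h : (∫ x, f x ∂μ) ≠ 0) : Integrable f μ := by
  by_contra hc
  exact h (integral_undef hc)

lemma fin_telescope {M : ℕ} (G : Fin (M + 1) → ℝ) :
    ∑ ℓ : Fin M, (G ℓ.castSucc - G ℓ.succ) = G 0 - G (Fin.last M) := by
  induction M with
  | zero => simp [Fin.last]
  | succ M ih =>
    rw [Fin.sum_univ_castSucc]
    have h := ih (fun i => G i.castSucc)
    simp only [Fin.succ_castSucc, Fin.castSucc_zero] at h
    have h2 : ∀ ℓ : Fin M, G ℓ.castSucc.castSucc - G ℓ.castSucc.succ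
        = G ℓ.castSucc.castSucc - G ℓ.succ.castSucc := by
      intro ℓ; rw [Fin.succ_castSucc]
    rw [Finset.sum_congr rfl (fun ℓ _ => h2 ℓ), h, Fin.succ_last]
    ring
/-- KL decomposition for annealed importance sampling: with the forward path density `pr`
(built from kernels `F_ℓ` leaving `π_{θ_ℓ}` invariant), the backward path density `pl`
(built from the backward kernels `B_ℓ(x,x') = (π_{θ_ℓ}(x')/π_{θ_ℓ}(x))F_ℓ(x',x)`), and the
reference path density `p` (built from kernels `F*_ℓ` transporting `π_{θ_{ℓ-1}}` exactly to
`π_{θ_ℓ}`), one has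
`KL(P‖P⃖) = KL(P‖P⃗) + Σ_ℓ KL(π_{θ_{ℓ-1}}‖π_{θ_ℓ})`, and in particular
`KL(P‖P⃖) ≥ KL(P‖P⃗)`. -/
theorem ais_kl_decomposition (d M : ℕ)
    (πs : Fin (M + 1) → EuclideanSpace ℝ (Fin d) → ℝ)
    (hπ_pos : ∀ ℓ x, 0 < πs ℓ x) (hπ_meas : ∀ ℓ, Measurable (πs ℓ))
    (hπ_norm : ∀ ℓ, ∫ x, πs ℓ x = 1)
    (F Fstar : Fin M → EuclideanSpace ℝ (Fin d) → EuclideanSpace ℝ (Fin d) → ℝ)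
    (hF_meas : ∀ ℓ, Measurable (Function.uncurry (F ℓ)))
    (hFs_meas : ∀ ℓ, Measurable (Function.uncurry (Fstar ℓ)))
    (hF_pos : ∀ ℓ x y, 0 < F ℓ x y) (hFs_pos : ∀ ℓ x y, 0 < Fstar ℓ x y)
    (hF_kernel : ∀ ℓ x, ∫ y, F ℓ x y = 1) (hFs_kernel : ∀ ℓ x, ∫ y, Fstar ℓ x y = 1)
    -- `F_ℓ` leaves `π_{θ_ℓ}` invariant:
    (hF_inv : ∀ ℓ y, ∫ x, πs ℓ.succ x * F ℓ x y = πs ℓ.succ y)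
    -- `F*_ℓ` transports `π_{θ_{ℓ-1}}` to `π_{θ_ℓ}`:
    (hFs_transport : ∀ ℓ y, ∫ x, πs ℓ.castSucc x * Fstar ℓ x y = πs ℓ.succ y)
    (p pr pl : (Fin (M + 1) → EuclideanSpace ℝ (Fin d)) → ℝ)
    (hp : ∀ x, p x = πs 0 (x 0) * ∏ ℓ : Fin M, Fstar ℓ (x ℓ.castSucc) (x ℓ.succ))
    (hpr : ∀ x, pr x = πs 0 (x 0) * ∏ ℓ : Fin M, F ℓ (x ℓ.castSucc) (x ℓ.succ))
    (hpl : ∀ x, pl x = πs (Fin.last M) (x (Fin.last M)) *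
      ∏ ℓ : Fin M, (πs ℓ.succ (x ℓ.castSucc) / πs ℓ.succ (x ℓ.succ)) *
        F ℓ (x ℓ.castSucc) (x ℓ.succ))
    (hint_pr : Integrable (fun x => p x * Real.log (p x / pr x)) volume)
    (hint_marg : ∀ ℓ : Fin M, Integrable
      (fun y => πs ℓ.castSucc y * Real.log (πs ℓ.castSucc y / πs ℓ.succ y)) volume) :
    ((∫ x, p x * Real.log (p x / pl x)) =
      (∫ x, p x * Real.log (p x / pr x)) +
        ∑ ℓ : Fin M, ∫ y, πs ℓ.castSucc y * Real.log (πs ℓ.castSucc y / πs ℓ.succ y)) ∧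
    (∫ x, p x * Real.log (p x / pr x)) ≤ ∫ x, p x * Real.log (p x / pl x) := by
  -- basic positivity and measurability
  have hp_pos : ∀ x, 0 < p x := fun x => by
    rw [hp]; exact mul_pos (hπ_pos _ _) (Finset.prod_pos fun ℓ _ => hFs_pos ℓ _ _)
  have hpr_pos : ∀ x, 0 < pr x := fun x => by
    rw [hpr]; exact mul_pos (hπ_pos _ _) (Finset.prod_pos fun ℓ _ => hF_pos ℓ _ _)
  have hpl_pos : ∀ x, 0 < pl x := fun x => by
    rw [hpl]
    exact mul_pos (hπ_pos _ _) (Finset.prod_pos fun ℓ _ =>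
      mul_pos (div_pos (hπ_pos _ _) (hπ_pos _ _)) (hF_pos ℓ _ _))
  have hp_meas : Measurable p := by
    have h1 : Measurable fun x : Fin (M + 1) → EuclideanSpace ℝ (Fin d) => πs 0 (x 0) :=
      (hπ_meas 0).comp (measurable_pi_apply 0)
    have h2 : ∀ ℓ : Fin M, Measurable fun x : Fin (M + 1) → EuclideanSpace ℝ (Fin d) =>
        Fstar ℓ (x ℓ.castSucc) (x ℓ.succ) := by
      intro ℓ
      have : Measurable fun x : Fin (M + 1) → EuclideanSpace ℝ (Fin d) =>
          (x ℓ.castSucc, x ℓ.succ) :=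
        (measurable_pi_apply _).prodMk (measurable_pi_apply _)
      exact (hFs_meas ℓ).comp this
    have : p = fun x => πs 0 (x 0) * ∏ ℓ : Fin M, Fstar ℓ (x ℓ.castSucc) (x ℓ.succ) :=
      funext hp
    rw [this]
    exact h1.mul (Finset.measurable_prod _ fun ℓ _ => h2 ℓ)
  -- integrability of the densities and kernels
  have hπ_int : ∀ ℓ, Integrable (πs ℓ) volume := fun ℓ =>
    integrable_of_integral_ne_zero (by rw [hπ_norm ℓ]; norm_num)
  have hFs_int : ∀ ℓ x, Integrable (fun y => Fstar ℓ x y) volume := fun ℓ x =>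
    integrable_of_integral_ne_zero (by rw [hFs_kernel ℓ x]; norm_num)
  have htr_int : ∀ ℓ y, Integrable (fun x => πs ℓ.castSucc x * Fstar ℓ x y) volume :=
    fun ℓ y => integrable_of_integral_ne_zero
      (by rw [hFs_transport ℓ y]; exact (hπ_pos ℓ.succ y).ne')
  -- ℝ≥0∞-valued kernel facts
  have hK1 : ∀ (ℓ : Fin M) (x : EuclideanSpace ℝ (Fin d)),
      ∫⁻ y, ENNReal.ofReal (Fstar ℓ x y) = 1 := by
    intro ℓ x
    rw [← ofReal_integral_eq_lintegral_ofReal (hFs_int ℓ x)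
      (Filter.Eventually.of_forall fun y => (hFs_pos ℓ x y).le), hFs_kernel, ENNReal.ofReal_one]
  have htrE : ∀ (ℓ : Fin M) (y : EuclideanSpace ℝ (Fin d)),
      ∫⁻ x, ENNReal.ofReal (πs ℓ.castSucc x) * ENNReal.ofReal (Fstar ℓ x y) =
        ENNReal.ofReal (πs ℓ.succ y) := by
    intro ℓ y
    calc ∫⁻ x, ENNReal.ofReal (πs ℓ.castSucc x) * ENNReal.ofReal (Fstar ℓ x y)
        = ∫⁻ x, ENNReal.ofReal (πs ℓ.castSucc x * Fstar ℓ x y) := by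
          refine lintegral_congr fun x => ?_
          rw [ENNReal.ofReal_mul (hπ_pos _ x).le]
      _ = ENNReal.ofReal (∫ x, πs ℓ.castSucc x * Fstar ℓ x y) :=
          (ofReal_integral_eq_lintegral_ofReal (htr_int ℓ y)
            (Filter.Eventually.of_forall fun x =>
              mul_nonneg (hπ_pos _ x).le (hFs_pos ℓ x y).le)).symm
      _ = ENNReal.ofReal (πs ℓ.succ y) := by rw [hFs_transport]
  -- marginalization in ℝ≥0∞
  have hmarg : ∀ (k : Fin (M + 1)) (g : EuclideanSpace ℝ (Fin d) → ℝ≥0∞), Measurable g →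
      (∫⁻ x : Fin (M + 1) → EuclideanSpace ℝ (Fin d), ENNReal.ofReal (p x) * g (x k)) =
        ∫⁻ y, ENNReal.ofReal (πs k y) * g y := by
    intro k g hg
    have hKmeas : ∀ ℓ : Fin M, Measurable (Function.uncurry
        (fun x y => ENNReal.ofReal (Fstar ℓ x y))) := by
      intro ℓ
      exact (hFs_meas ℓ).ennreal_ofReal
    have hch := chain_lintegral (volume : Measure (EuclideanSpace ℝ (Fin d))) M
      (fun i z => ENNReal.ofReal (πs i z)) (fun ℓ x y => ENNReal.ofReal (Fstar ℓ x y))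
      (fun i => (hπ_meas i).ennreal_ofReal) hKmeas (fun ℓ x => hK1 ℓ x)
      (fun ℓ y => htrE ℓ y) k g hg
    rw [volume_pi]
    rw [← hch]
    refine lintegral_congr fun x => ?_
    rw [hp x, ENNReal.ofReal_mul (hπ_pos 0 (x 0)).le,
      ENNReal.ofReal_prod_of_nonneg (fun ℓ _ => (hFs_pos ℓ _ _).le)]
  -- real-valued marginalization
  have hmargR : ∀ (k : Fin (M + 1)) (f : EuclideanSpace ℝ (Fin d) → ℝ), Measurable f →
      Integrable (fun y => πs k y * f y) volume →
      Integrable (fun x : Fin (M + 1) → EuclideanSpace ℝ (Fin d) => p x * f (x k)) volume ∧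
      (∫ x : Fin (M + 1) → EuclideanSpace ℝ (Fin d), p x * f (x k)) = ∫ y, πs k y * f y := by
    intro k f hf hif
    have hmeas : Measurable fun x : Fin (M + 1) → EuclideanSpace ℝ (Fin d) =>
        p x * f (x k) := hp_meas.mul (hf.comp (measurable_pi_apply k))
    have hint : Integrable (fun x : Fin (M + 1) → EuclideanSpace ℝ (Fin d) =>
        p x * f (x k)) volume := by
      refine ⟨hmeas.aestronglyMeasurable, ?_⟩
      rw [hasFiniteIntegral_iff_norm]
      have hre : (fun x : Fin (M + 1) → EuclideanSpace ℝ (Fin d) =>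
          ENNReal.ofReal ‖p x * f (x k)‖) =
          fun x => ENNReal.ofReal (p x) * ENNReal.ofReal |f (x k)| := by
        funext x
        rw [Real.norm_eq_abs, abs_mul, abs_of_pos (hp_pos x),
          ENNReal.ofReal_mul (hp_pos x).le]
      rw [hre, hmarg k (fun y => ENNReal.ofReal |f y|) hf.abs.ennreal_ofReal]
      have hre2 : (fun y => ENNReal.ofReal (πs k y) * ENNReal.ofReal |f y|) =
          fun y => ENNReal.ofReal (πs k y * |f y|) := by
        funext y; rw [ENNReal.ofReal_mul (hπ_pos k y).le]
      rw [hre2, ← ofReal_integral_eq_lintegral_ofReal ?_ ?_]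
      · exact ENNReal.ofReal_lt_top
      · have := hif.abs
        refine this.congr (Filter.Eventually.of_forall fun y => ?_)
        show |πs k y * f y| = πs k y * |f y|
        rw [abs_mul, abs_of_pos (hπ_pos k y)]
      · exact Filter.Eventually.of_forall fun y =>
          mul_nonneg (hπ_pos k y).le (abs_nonneg _)
    refine ⟨hint, ?_⟩
    rw [integral_eq_lintegral_pos_part_sub_lintegral_neg_part hint,
      integral_eq_lintegral_pos_part_sub_lintegral_neg_part hif]
    congr 1
    · congr 1
      have hre : (fun x : Fin (M + 1) → EuclideanSpace ℝ (Fin d) =>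
          ENNReal.ofReal (p x * f (x k))) =
          fun x => ENNReal.ofReal (p x) * ENNReal.ofReal (f (x k)) := by
        funext x; rw [ENNReal.ofReal_mul (hp_pos x).le]
      rw [hre, hmarg k (fun y => ENNReal.ofReal (f y)) hf.ennreal_ofReal]
      refine lintegral_congr fun y => ?_
      rw [ENNReal.ofReal_mul (hπ_pos k y).le]
    · congr 1
      have hre : (fun x : Fin (M + 1) → EuclideanSpace ℝ (Fin d) =>
          ENNReal.ofReal (-(p x * f (x k)))) =
          fun x => ENNReal.ofReal (p x) * ENNReal.ofReal (-f (x k)) := by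
        funext x; rw [← mul_neg, ENNReal.ofReal_mul (hp_pos x).le]
      rw [hre, hmarg k (fun y => ENNReal.ofReal (-f y)) hf.neg.ennreal_ofReal]
      refine lintegral_congr fun y => ?_
      rw [← mul_neg, ENNReal.ofReal_mul (hπ_pos k y).le]
  -- pointwise log identity
  have hpt : ∀ x : Fin (M + 1) → EuclideanSpace ℝ (Fin d),
      Real.log (p x / pl x) = Real.log (p x / pr x) +
        ∑ ℓ : Fin M, Real.log (πs ℓ.castSucc (x ℓ.castSucc) / πs ℓ.succ (x ℓ.castSucc)) := by
    intro x
    have hG := fin_telescope (fun i => Real.log (πs i (x i)))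
    beta_reduce at hG
    have hlpr : Real.log (pr x) = Real.log (πs 0 (x 0)) +
        ∑ ℓ : Fin M, Real.log (F ℓ (x ℓ.castSucc) (x ℓ.succ)) := by
      rw [hpr, Real.log_mul (hπ_pos _ _).ne' (Finset.prod_pos fun ℓ _ => hF_pos ℓ _ _).ne',
        Real.log_prod (fun ℓ _ => (hF_pos ℓ _ _).ne')]
    have hlpl : Real.log (pl x) = Real.log (πs (Fin.last M) (x (Fin.last M))) +
        ∑ ℓ : Fin M, (Real.log (πs ℓ.succ (x ℓ.castSucc)) - Real.log (πs ℓ.succ (x ℓ.succ)) +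
          Real.log (F ℓ (x ℓ.castSucc) (x ℓ.succ))) := by
      rw [hpl, Real.log_mul (hπ_pos _ _).ne' (Finset.prod_pos fun ℓ _ =>
          mul_pos (div_pos (hπ_pos _ _) (hπ_pos _ _)) (hF_pos ℓ _ _)).ne',
        Real.log_prod (fun ℓ _ =>
          (mul_pos (div_pos (hπ_pos _ _) (hπ_pos _ _)) (hF_pos ℓ _ _)).ne')]
      congr 1
      refine Finset.sum_congr rfl fun ℓ _ => ?_
      rw [Real.log_mul (div_pos (hπ_pos _ _) (hπ_pos _ _)).ne' (hF_pos ℓ _ _).ne',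
        Real.log_div (hπ_pos _ _).ne' (hπ_pos _ _).ne']
    have h1 : Real.log (p x / pl x) = Real.log (p x) - Real.log (pl x) :=
      Real.log_div (hp_pos x).ne' (hpl_pos x).ne'
    have h2 : Real.log (p x / pr x) = Real.log (p x) - Real.log (pr x) :=
      Real.log_div (hp_pos x).ne' (hpr_pos x).ne'
    have h3 : ∀ ℓ : Fin M, Real.log (πs ℓ.castSucc (x ℓ.castSucc) / πs ℓ.succ (x ℓ.castSucc)) =
        Real.log (πs ℓ.castSucc (x ℓ.castSucc)) - Real.log (πs ℓ.succ (x ℓ.castSucc)) :=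
      fun ℓ => Real.log_div (hπ_pos _ _).ne' (hπ_pos _ _).ne'
    rw [h1, h2, Finset.sum_congr rfl (fun ℓ _ => h3 ℓ), hlpr, hlpl]
    rw [Finset.sum_sub_distrib] at hG ⊢
    rw [Finset.sum_add_distrib, Finset.sum_sub_distrib]
    linarith [hG]
  have hpt2 : (fun x : Fin (M + 1) → EuclideanSpace ℝ (Fin d) =>
      p x * Real.log (p x / pl x)) =
      fun x => p x * Real.log (p x / pr x) +
        ∑ ℓ : Fin M, p x * Real.log (πs ℓ.castSucc (x ℓ.castSucc) / πs ℓ.succ (x ℓ.castSucc)) := by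
    funext x
    rw [hpt x, mul_add, Finset.mul_sum]
  have hflm : ∀ ℓ : Fin M, Measurable fun y => Real.log (πs ℓ.castSucc y / πs ℓ.succ y) :=
    fun ℓ => Real.measurable_log.comp ((hπ_meas _).div (hπ_meas _))
  have hR := fun ℓ : Fin M => hmargR ℓ.castSucc
    (fun y => Real.log (πs ℓ.castSucc y / πs ℓ.succ y)) (hflm ℓ) (hint_marg ℓ)
  have heq : (∫ x, p x * Real.log (p x / pl x)) =
      (∫ x, p x * Real.log (p x / pr x)) +
        ∑ ℓ : Fin M, ∫ y, πs ℓ.castSucc y * Real.log (πs ℓ.castSucc y / πs ℓ.succ y) := by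
    calc ∫ x, p x * Real.log (p x / pl x)
        = ∫ x : Fin (M + 1) → EuclideanSpace ℝ (Fin d), (p x * Real.log (p x / pr x) +
            ∑ ℓ : Fin M, p x *
              Real.log (πs ℓ.castSucc (x ℓ.castSucc) / πs ℓ.succ (x ℓ.castSucc))) := by
          rw [hpt2]
      _ = (∫ x, p x * Real.log (p x / pr x)) +
          ∫ x : Fin (M + 1) → EuclideanSpace ℝ (Fin d), ∑ ℓ : Fin M, p x *
            Real.log (πs ℓ.castSucc (x ℓ.castSucc) / πs ℓ.succ (x ℓ.castSucc)) :=
          integral_add hint_pr (integrable_finset_sum _ fun ℓ _ => (hR ℓ).1)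
      _ = (∫ x, p x * Real.log (p x / pr x)) +
          ∑ ℓ : Fin M, ∫ x : Fin (M + 1) → EuclideanSpace ℝ (Fin d), p x *
            Real.log (πs ℓ.castSucc (x ℓ.castSucc) / πs ℓ.succ (x ℓ.castSucc)) := by
          rw [integral_finset_sum _ fun ℓ _ => (hR ℓ).1]
      _ = _ := by
          congr 1
          exact Finset.sum_congr rfl fun ℓ _ => (hR ℓ).2
  have hnn : ∀ ℓ : Fin M,
      0 ≤ ∫ y, πs ℓ.castSucc y * Real.log (πs ℓ.castSucc y / πs ℓ.succ y) := by
    intro ℓ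
    have hpw : ∀ y, πs ℓ.castSucc y - πs ℓ.succ y ≤
        πs ℓ.castSucc y * Real.log (πs ℓ.castSucc y / πs ℓ.succ y) := by
      intro y
      have ha := hπ_pos ℓ.castSucc y
      have hb := hπ_pos ℓ.succ y
      have h1 : Real.log (πs ℓ.succ y / πs ℓ.castSucc y) ≤
          πs ℓ.succ y / πs ℓ.castSucc y - 1 :=
        Real.log_le_sub_one_of_pos (div_pos hb ha)
      have h2 : Real.log (πs ℓ.castSucc y / πs ℓ.succ y) =
          -Real.log (πs ℓ.succ y / πs ℓ.castSucc y) := by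
        rw [Real.log_div ha.ne' hb.ne', Real.log_div hb.ne' ha.ne']; ring
      rw [h2]
      have h3 : πs ℓ.castSucc y * (πs ℓ.succ y / πs ℓ.castSucc y - 1) =
          πs ℓ.succ y - πs ℓ.castSucc y := by field_simp
      nlinarith [mul_le_mul_of_nonneg_left h1 ha.le]
    have hmono := integral_mono ((hπ_int ℓ.castSucc).sub (hπ_int ℓ.succ)) (hint_marg ℓ) hpw
    simp only [Pi.sub_apply] at hmono
    rw [integral_sub (hπ_int _) (hπ_int _), hπ_norm, hπ_norm, sub_self] at hmono
    exact hmono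
  exact ⟨heq, by
    rw [heq]
    exact le_add_of_nonneg_right (Finset.sum_nonneg fun ℓ _ => hnn ℓ)⟩
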